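/- For every unit vector a in R^d, E[exp(X_a²/3)] ≤ √3, where X_a is the Rademacher sum with coefficients a. -/

import Mathlib

open MeasureTheory ProbabilityTheory Real

lemma gauss_shift_eq (s : ℝ) : (fun t : ℝ => exp (s * t - t ^ 2 / 2))
    = fun t => exp (s ^ 2 / 2) * exp (-(1/2 : ℝ) * (t - s) ^ 2) := by
  funext t
  rw [← Real.exp_add]
  ring_nf

lemma gauss_integrable (s : ℝ) : Integrable (fun t : ℝ => exp (s * t - t ^ 2 / 2)) := by
  rw [gauss_shift_eq]
  exact ((integrable_exp_neg_mul_sq (by norm_num : (0:ℝ) < 1/2)).comp_sub_right s).const_mul _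

lemma gauss_integral (s : ℝ) :
    ∫ t : ℝ, exp (s * t - t ^ 2 / 2) = Real.sqrt (2 * π) * exp (s ^ 2 / 2) := by
  rw [gauss_shift_eq, MeasureTheory.integral_const_mul]
  rw [integral_sub_right_eq_self (fun t => exp (-(1/2 : ℝ) * t ^ 2)) s]
  rw [integral_gaussian]
  rw [mul_comm]
  norm_num
  ring

section Rademacher

variable {Ω : Type*} [MeasureSpace Ω] [IsProbabilityMeasure (ℙ : Measure Ω)]

lemma rademacher_ae {e : Ω → ℝ} (hm : Measurable e)
    (h1 : ℙ {ω | e ω = 1} = 1/2) (h2 : ℙ {ω | e ω = -1} = 1/2) :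
    ∀ᵐ ω ∂(ℙ : Measure Ω), e ω = 1 ∨ e ω = -1 := by
  have hA : MeasurableSet {ω | e ω = 1} := hm (measurableSet_singleton 1)
  have hB : MeasurableSet {ω | e ω = -1} := hm (measurableSet_singleton (-1))
  have hdisj : Disjoint {ω | e ω = 1} {ω | e ω = -1} := by
    rw [Set.disjoint_left]
    intro ω hω1 hω2
    simp only [Set.mem_setOf_eq] at hω1 hω2
    rw [hω1] at hω2; norm_num at hω2
  have hU : ℙ ({ω | e ω = 1} ∪ {ω | e ω = -1}) = 1 := by
    rw [measure_union hdisj hB, h1, h2]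
    rw [ENNReal.div_add_div_same]
    norm_num
    exact ENNReal.div_self (two_ne_zero) (ENNReal.ofNat_ne_top)
  have := prob_compl_eq_zero_iff (hA.union hB) |>.mpr hU
  rw [ae_iff]
  convert this using 2
  ext ω; simp

lemma rademacher_exp_int {e : Ω → ℝ} (hm : Measurable e)
    (h1 : ℙ {ω | e ω = 1} = 1/2) (h2 : ℙ {ω | e ω = -1} = 1/2) (s : ℝ) :
    ∫ ω, exp (s * e ω) ∂ℙ = (exp s + exp (-s)) / 2 := by
  have hA : MeasurableSet {ω | e ω = 1} := hm (measurableSet_singleton 1)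
  have hB : MeasurableSet {ω | e ω = -1} := hm (measurableSet_singleton (-1))
  have hae := rademacher_ae hm h1 h2
  have hint : Integrable (fun ω => exp (s * e ω)) ℙ := by
    refine (integrable_const (exp |s|)).mono' ((hm.const_mul s).exp.aestronglyMeasurable) ?_
    filter_upwards [hae] with ω h
    rcases h with h | h <;>
      simp only [h, Real.norm_eq_abs, Real.abs_exp, mul_one, mul_neg_one, Real.exp_le_exp]
    · exact le_abs_self s
    · exact neg_le_abs s
  have hcompl : ({ω | e ω = 1}ᶜ : Set Ω) =ᵐ[ℙ] ({ω | e ω = -1} : Set Ω) := by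
    rw [MeasureTheory.ae_eq_set]
    constructor
    · have hsub : ({ω | e ω = 1}ᶜ \ {ω | e ω = -1} : Set Ω) ⊆ {ω | ¬(e ω = 1 ∨ e ω = -1)} := by
        intro ω hω
        simp only [Set.mem_diff, Set.mem_compl_iff, Set.mem_setOf_eq] at hω ⊢
        tauto
      refine measure_mono_null hsub ?_
      rw [← ae_iff] at *
      exact hae
    · refine measure_mono_null (fun ω hω => ?_) (measure_empty (μ := (ℙ : Measure Ω)))
      simp only [Set.mem_diff, Set.mem_compl_iff, Set.mem_setOf_eq, not_not] at hω
      exact absurd hω.2 (by rw [hω.1]; norm_num)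
  rw [← integral_add_compl hA hint]
  have e1 : ∫ ω in {ω | e ω = 1}, exp (s * e ω) ∂ℙ = exp s / 2 := by
    rw [setIntegral_congr_fun hA (g := fun _ => exp s) (fun ω hω => by
      simp only [Set.mem_setOf_eq] at hω; rw [hω, mul_one])]
    rw [setIntegral_const, measureReal_def, h1]
    simp [ENNReal.toReal_div]
    ring
  have e2 : ∫ ω in {ω | e ω = 1}ᶜ, exp (s * e ω) ∂ℙ = exp (-s) / 2 := by
    rw [setIntegral_congr_set hcompl]
    rw [setIntegral_congr_fun hB (g := fun _ => exp (-s)) (fun ω hω => by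
      simp only [Set.mem_setOf_eq] at hω; rw [hω, mul_neg_one])]
    rw [setIntegral_const, measureReal_def, h2]
    simp [ENNReal.toReal_div]
    ring
  rw [e1, e2]
  ring

lemma rademacher_mgf_bound
    {d : ℕ} (a : Fin d → ℝ) (ha : ∑ i, a i ^ 2 = 1)
    (ε : Fin d → Ω → ℝ) (hmeas : ∀ i, Measurable (ε i))
    (hind : iIndepFun ε ℙ)
    (hp : ∀ i, ℙ {ω | ε i ω = 1} = 1/2 ∧ ℙ {ω | ε i ω = -1} = 1/2) (s : ℝ) :
    mgf (fun ω => ∑ i, a i * ε i ω) ℙ s ≤ exp (s ^ 2 / 2) := by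
  have hYind : iIndepFun (fun i ω => a i * ε i ω) ℙ :=
    hind.comp (fun i x => a i * x) (fun i => measurable_const_mul _)
  have hYmeas : ∀ i, Measurable (fun ω => a i * ε i ω) :=
    fun i => (hmeas i).const_mul _
  have hXeq : (fun ω => ∑ i, a i * ε i ω) = ∑ i : Fin d, (fun ω => a i * ε i ω) := by
    funext ω; simp
  rw [hXeq, hYind.mgf_sum hYmeas]
  have hterm : ∀ i : Fin d, mgf (fun ω => a i * ε i ω) ℙ s ≤ exp ((s * a i) ^ 2 / 2) := by
    intro i
    have : mgf (fun ω => a i * ε i ω) ℙ s = ∫ ω, exp ((s * a i) * ε i ω) ∂ℙ := by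
      unfold mgf
      congr 1
      funext ω
      ring_nf
    rw [this, rademacher_exp_int (hmeas i) (hp i).1 (hp i).2]
    have := Real.cosh_le_exp_half_sq (s * a i)
    rwa [Real.cosh_eq] at this
  calc ∏ i, mgf (fun ω => a i * ε i ω) ℙ s ≤ ∏ i, exp ((s * a i) ^ 2 / 2) := by
        exact Finset.prod_le_prod (fun i _ => mgf_nonneg) (fun i _ => hterm i)
    _ = exp (∑ i, (s * a i) ^ 2 / 2) := by rw [Real.exp_sum]
    _ = exp (s ^ 2 / 2) := by
        congr 1
        rw [← Finset.sum_div]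
        simp_rw [mul_pow, ← Finset.mul_sum, ha, mul_one]

end Rademacher

theorem rademacher_exp_sq_third_bound
    {Ω : Type*} [MeasureSpace Ω] [IsProbabilityMeasure (ℙ : Measure Ω)]
    {d : ℕ} (a : Fin d → ℝ) (ha : ∑ i, a i ^ 2 = 1)
    (ε : Fin d → Ω → ℝ) (hmeas : ∀ i, Measurable (ε i))
    (hind : iIndepFun ε ℙ)
    (hp : ∀ i, ℙ {ω | ε i ω = 1} = 1/2 ∧ ℙ {ω | ε i ω = -1} = 1/2) :
    ∫ ω, Real.exp ((∑ i, a i * ε i ω) ^ 2 / 3) ∂ℙ ≤ Real.sqrt 3 := by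
  set X : Ω → ℝ := fun ω => ∑ i, a i * ε i ω with hX
  set M : ℝ := ∑ i, |a i| with hM
  set c : ℝ := Real.sqrt (2/3) with hcdef
  have hc2 : c ^ 2 = 2/3 := Real.sq_sqrt (by norm_num)
  have hXm : Measurable X := Finset.measurable_sum _ (fun i _ => (hmeas i).const_mul (a i))
  -- a.e. bound on X
  have haeX : ∀ᵐ ω ∂(ℙ : Measure Ω), |X ω| ≤ M := by
    have h := MeasureTheory.ae_all_iff.mpr
      (fun i : Fin d => rademacher_ae (hmeas i) (hp i).1 (hp i).2)
    filter_upwards [h] with ω hω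
    calc |X ω| ≤ ∑ i, |a i * ε i ω| := Finset.abs_sum_le_sum_abs _ _
      _ ≤ ∑ i, |a i| := by
          refine Finset.sum_le_sum (fun i _ => ?_)
          rw [abs_mul]
          rcases hω i with h1 | h1 <;> rw [h1] <;> simp
  have hmgf : ∀ s : ℝ, mgf X ℙ s ≤ exp (s ^ 2 / 2) :=
    fun s => rademacher_mgf_bound a ha ε hmeas hind hp s
  -- integrability of the target
  have hXint : Integrable (fun ω => exp (X ω ^ 2 / 3)) ℙ := by
    refine (integrable_const (exp (M ^ 2 / 3))).mono'
      ((hXm.pow_const 2).div_const 3).exp.aestronglyMeasurable ?_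
    filter_upwards [haeX] with ω h
    rw [Real.norm_eq_abs, Real.abs_exp, Real.exp_le_exp]
    have : X ω ^ 2 ≤ M ^ 2 := by
      rw [← sq_abs (X ω)]
      exact pow_le_pow_left₀ (abs_nonneg _) h 2
    linarith
  -- pointwise Gaussian identity
  have point : ∀ ω, exp (X ω ^ 2 / 3)
      = (Real.sqrt (2 * π))⁻¹ * ∫ t : ℝ, exp (c * X ω * t - t ^ 2 / 2) := by
    intro ω
    rw [gauss_integral (c * X ω)]
    have : (c * X ω) ^ 2 / 2 = X ω ^ 2 / 3 := by
      rw [mul_pow, hc2]; ring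
    rw [this, ← mul_assoc, inv_mul_cancel₀ (by positivity : Real.sqrt (2*π) ≠ 0), one_mul]
  -- measurability on the product
  have hFm : Measurable (fun p : Ω × ℝ => ENNReal.ofReal (exp (c * X p.1 * p.2 - p.2 ^ 2 / 2))) := by
    apply Measurable.ennreal_ofReal
    apply Measurable.exp
    exact (((hXm.comp measurable_fst).const_mul c).mul measurable_snd).sub
      ((measurable_snd.pow_const 2).div_const 2)
  -- integrability in ω for fixed t
  have hint_t : ∀ t : ℝ, Integrable (fun ω => exp (c * X ω * t - t ^ 2 / 2)) ℙ := by
    intro t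
    refine (integrable_const (exp (|c * t| * M))).mono'
      ((((hXm.const_mul c).mul_const t).sub measurable_const).exp.aestronglyMeasurable) ?_
    filter_upwards [haeX] with ω h
    rw [Real.norm_eq_abs, Real.abs_exp, Real.exp_le_exp]
    have h1 : c * X ω * t ≤ |c * t| * M := by
      calc c * X ω * t ≤ |c * X ω * t| := le_abs_self _
        _ = |c * t| * |X ω| := by rw [abs_mul, abs_mul, abs_mul]; ring
        _ ≤ |c * t| * M := mul_le_mul_of_nonneg_left h (abs_nonneg _)
    nlinarith [sq_nonneg t]
  -- the key ENNReal chain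
  have key : ENNReal.ofReal (∫ ω, exp (X ω ^ 2 / 3) ∂ℙ) ≤ ENNReal.ofReal (Real.sqrt 3) := by
    rw [ofReal_integral_eq_lintegral_ofReal hXint (Filter.Eventually.of_forall fun ω => exp_nonneg _)]
    have h2 : ∀ ω, ENNReal.ofReal (exp (X ω ^ 2 / 3))
        = ENNReal.ofReal ((Real.sqrt (2 * π))⁻¹)
          * ∫⁻ t : ℝ, ENNReal.ofReal (exp (c * X ω * t - t ^ 2 / 2)) := by
      intro ω
      rw [point ω, ENNReal.ofReal_mul (by positivity),
        ofReal_integral_eq_lintegral_ofReal (gauss_integrable (c * X ω))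
          (Filter.Eventually.of_forall fun t => exp_nonneg _)]
    simp_rw [h2]
    rw [lintegral_const_mul _ hFm.lintegral_prod_right']
    rw [lintegral_lintegral_swap hFm.aemeasurable]
    have h3 : ∀ t : ℝ, ∫⁻ ω, ENNReal.ofReal (exp (c * X ω * t - t ^ 2 / 2)) ∂ℙ
        = ENNReal.ofReal (exp (-(1/2 : ℝ) * t ^ 2) * mgf X ℙ (c * t)) := by
      intro t
      rw [← ofReal_integral_eq_lintegral_ofReal (hint_t t)
          (Filter.Eventually.of_forall fun ω => exp_nonneg _)]
      congr 1
      have : (fun ω => exp (c * X ω * t - t ^ 2 / 2))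
          = fun ω => exp (-(1/2 : ℝ) * t ^ 2) * exp ((c * t) * X ω) := by
        funext ω; rw [← Real.exp_add]; ring_nf
      rw [this, MeasureTheory.integral_const_mul]
      rfl
    simp_rw [h3]
    have h4 : ∫⁻ t : ℝ, ENNReal.ofReal (exp (-(1/2 : ℝ) * t ^ 2) * mgf X ℙ (c * t))
        ≤ ENNReal.ofReal (Real.sqrt (π / (1/6 : ℝ))) := by
      have hb : ∀ t : ℝ, exp (-(1/2 : ℝ) * t ^ 2) * mgf X ℙ (c * t)
          ≤ exp (-(1/6 : ℝ) * t ^ 2) := by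
        intro t
        calc exp (-(1/2 : ℝ) * t ^ 2) * mgf X ℙ (c * t)
            ≤ exp (-(1/2 : ℝ) * t ^ 2) * exp ((c * t) ^ 2 / 2) :=
              mul_le_mul_of_nonneg_left (hmgf (c * t)) (exp_nonneg _)
          _ = exp (-(1/6 : ℝ) * t ^ 2) := by
              rw [← Real.exp_add]
              congr 1
              rw [mul_pow, hc2]
              ring
      calc ∫⁻ t : ℝ, ENNReal.ofReal (exp (-(1/2 : ℝ) * t ^ 2) * mgf X ℙ (c * t))
          ≤ ∫⁻ t : ℝ, ENNReal.ofReal (exp (-(1/6 : ℝ) * t ^ 2)) :=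
            lintegral_mono fun t => ENNReal.ofReal_le_ofReal (hb t)
        _ = ENNReal.ofReal (∫ t : ℝ, exp (-(1/6 : ℝ) * t ^ 2)) := by
            rw [ofReal_integral_eq_lintegral_ofReal
              (integrable_exp_neg_mul_sq (by norm_num : (0:ℝ) < 1/6))
              (Filter.Eventually.of_forall fun t => exp_nonneg _)]
        _ = ENNReal.ofReal (Real.sqrt (π / (1/6 : ℝ))) := by rw [integral_gaussian]
    calc ENNReal.ofReal (Real.sqrt (2 * π))⁻¹
          * ∫⁻ t : ℝ, ENNReal.ofReal (exp (-(1/2 : ℝ) * t ^ 2) * mgf X ℙ (c * t))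
        ≤ ENNReal.ofReal (Real.sqrt (2 * π))⁻¹ * ENNReal.ofReal (Real.sqrt (π / (1/6 : ℝ))) := by
          exact mul_le_mul_right h4 _
      _ = ENNReal.ofReal ((Real.sqrt (2 * π))⁻¹ * Real.sqrt (π / (1/6 : ℝ))) := by
          rw [ENNReal.ofReal_mul (by positivity)]
      _ = ENNReal.ofReal (Real.sqrt 3) := by
          congr 1
          have h6 : π / (1/6 : ℝ) = 3 * (2 * π) := by ring
          rw [h6, Real.sqrt_mul (by norm_num : (0:ℝ) ≤ 3)]
          rw [inv_mul_eq_div, mul_div_assoc,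
            div_self (by positivity : Real.sqrt (2*π) ≠ 0), mul_one]
  exact (ENNReal.ofReal_le_ofReal_iff (Real.sqrt_nonneg 3)).mp key
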